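/- Ghouila-Houri row version for the whole matrix: if B ∈ {0,±1}^{n×m} is totally unimodular, then there exists x ∈ {±1}^n such that every entry of x^T B lies in {0, +1, -1}. -/

import Mathlib

open Matrix

/-- A real matrix is totally unimodular if every square submatrix has determinant 0, +1 or -1. -/
def IsTU {m n : Type*} (A : Matrix m n ℝ) : Prop :=
  ∀ (k : ℕ) (f : Fin k → m) (g : Fin k → n), Function.Injective f → Function.Injective g →
    (A.submatrix f g).det ∈ ({0, 1, -1} : Set ℝ)

lemma tu_entry {m n : Type*} (B : Matrix m n ℝ) (hB : IsTU B) (i : m) (j : n) :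
    B i j = 0 ∨ B i j = 1 ∨ B i j = -1 := by
  have h := hB 1 (fun _ => i) (fun _ => j)
    (fun a b _ => Subsingleton.elim a b) (fun a b _ => Subsingleton.elim a b)
  simpa [Matrix.det_fin_one] using h


noncomputable def intR : Subring ℝ := (Int.castRingHom ℝ).range

lemma mem_intR {r : ℝ} : r ∈ intR ↔ ∃ k : ℤ, (k : ℝ) = r := by
  simp [intR, RingHom.mem_range]

lemma intR_det {k : ℕ} (M : Matrix (Fin k) (Fin k) ℝ) (h : ∀ i j, M i j ∈ intR) :
    M.det ∈ intR := by
  rw [Matrix.det_apply']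
  refine Subring.sum_mem _ fun σ _ => Subring.mul_mem _ ?_ (Subring.prod_mem _ fun i _ => h _ _)
  exact mem_intR.2 ⟨_, rfl⟩

lemma key {m n : Type*} [Fintype m] [Fintype n]
    (B : Matrix m n ℝ) (hB : IsTU B) (lo hi : n → ℤ)
    (z : m → ℝ)
    (hz : z ∈ Set.extremePoints ℝ {z : m → ℝ | (∀ i, z i ∈ Set.Icc (0:ℝ) 1) ∧
      ∀ j, ((lo j : ℝ) ≤ ∑ i, z i * B i j ∧ ∑ i, z i * B i j ≤ (hi j : ℝ))}) :
    ∀ i, z i = 0 ∨ z i = 1 := by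
  classical
  set P : Set (m → ℝ) := {z : m → ℝ | (∀ i, z i ∈ Set.Icc (0:ℝ) 1) ∧
      ∀ j, ((lo j : ℝ) ≤ ∑ i, z i * B i j ∧ ∑ i, z i * B i j ≤ (hi j : ℝ))} with hPdef
  have hzP : z ∈ P := hz.1
  set s : n → ℝ := fun j => ∑ i, z i * B i j with hs
  set Tbox : m → Prop := fun i => z i = 0 ∨ z i = 1 with hTbox
  set Tcol : n → Prop := fun j => s j = lo j ∨ s j = hi j with hTcol
  set V : Set (m → ℝ) := {w | (∃ i, Tbox i ∧ w = Pi.single i 1) ∨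
    (∃ j, Tcol j ∧ w = fun i => B i j)} with hV
  -- Part 1 : the tight constraints span everything
  have hspan : Submodule.span ℝ V = ⊤ := by
    by_contra hne
    obtain ⟨φ, hφne, hφmap⟩ :=
      Submodule.exists_dual_map_eq_bot_of_lt_top (lt_top_iff_ne_top.2 hne)
        (inferInstance : Module.Projective ℝ ((m → ℝ) ⧸ Submodule.span ℝ V))
    have hφ0 : ∀ w ∈ V, φ w = 0 := by
      intro w hw
      have : φ w ∈ (Submodule.span ℝ V).map φ :=
        Submodule.mem_map_of_mem (Submodule.subset_span hw)
      rw [hφmap] at this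
      simpa using this
    set d : m → ℝ := fun i => φ (Pi.single i 1) with hd
    have hrepr : ∀ y : m → ℝ, φ y = ∑ i, y i * d i := by
      intro y
      have h1 : y = ∑ i, y i • (Pi.single i 1 : m → ℝ) := by
        funext j
        simp [Finset.sum_apply, Pi.single_apply]
      conv_lhs => rw [h1]
      rw [map_sum]
      refine Finset.sum_congr rfl fun i _ => ?_
      rw [_root_.map_smul]
      rfl
    have hdne : d ≠ 0 := by
      intro h0
      apply hφne
      apply LinearMap.ext
      intro y
      rw [hrepr y, h0]
      simp
    have hdbox : ∀ i, Tbox i → d i = 0 := fun i hti =>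
      hφ0 _ (Or.inl ⟨i, hti, rfl⟩)
    have hdcol : ∀ j, Tcol j → ∑ i, B i j * d i = 0 := by
      intro j htj
      have := hφ0 _ (Or.inr ⟨j, htj, rfl⟩)
      rwa [hrepr] at this
    -- for small t, z + t • d stays in P
    have hev : ∀ᶠ t in nhds (0:ℝ), z + t • d ∈ P := by
      have h1 : ∀ᶠ t in nhds (0:ℝ), ∀ i, (z + t • d) i ∈ Set.Icc (0:ℝ) 1 := by
        rw [Filter.eventually_all]
        intro i
        by_cases hti : Tbox i
        · refine Filter.Eventually.of_forall fun t => ?_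
          simp only [Pi.add_apply, Pi.smul_apply, smul_eq_mul, hdbox i hti, mul_zero, add_zero]
          exact hzP.1 i
        · have hlt : z i ∈ Set.Ioo (0:ℝ) 1 := by
            rcases hzP.1 i with ⟨h0, h1⟩
            simp only [hTbox] at hti
            push_neg at hti
            exact ⟨lt_of_le_of_ne h0 (Ne.symm hti.1), lt_of_le_of_ne h1 hti.2⟩
          have hc : Filter.Tendsto (fun t : ℝ => z i + t * d i) (nhds 0) (nhds (z i)) := by
            have h : Filter.Tendsto (fun t : ℝ => z i + t * d i) (nhds 0) (nhds (z i + 0 * d i)) :=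
              (continuous_const.add (continuous_id.mul continuous_const)).tendsto (0:ℝ)
            simpa using h
          filter_upwards [hc.eventually (isOpen_Ioo.eventually_mem hlt)] with t ht
          simp only [Pi.add_apply, Pi.smul_apply, smul_eq_mul]
          exact ⟨le_of_lt ht.1, le_of_lt ht.2⟩
      have h2 : ∀ᶠ t in nhds (0:ℝ), ∀ j,
          (lo j : ℝ) ≤ ∑ i, (z + t • d) i * B i j ∧ ∑ i, (z + t • d) i * B i j ≤ (hi j : ℝ) := by
        rw [Filter.eventually_all]
        intro j
        have hval : ∀ t : ℝ, ∑ i, (z + t • d) i * B i j = s j + t * ∑ i, B i j * d i := by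
          intro t
          rw [hs, Finset.mul_sum, ← Finset.sum_add_distrib]
          exact Finset.sum_congr rfl fun i _ => by simp; ring
        by_cases htj : Tcol j
        · refine Filter.Eventually.of_forall fun t => ?_
          rw [hval t, hdcol j htj, mul_zero, add_zero]
          exact hzP.2 j
        · have hlt : s j ∈ Set.Ioo (lo j : ℝ) (hi j : ℝ) := by
            rcases hzP.2 j with ⟨h0, h1⟩
            simp only [hTcol] at htj
            push_neg at htj
            exact ⟨lt_of_le_of_ne h0 (Ne.symm htj.1), lt_of_le_of_ne h1 htj.2⟩
          have hc : Filter.Tendsto (fun t : ℝ => s j + t * ∑ i, B i j * d i)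
              (nhds 0) (nhds (s j)) := by
            have h : Filter.Tendsto (fun t : ℝ => s j + t * ∑ i, B i j * d i)
                (nhds 0) (nhds (s j + 0 * ∑ i, B i j * d i)) :=
              (continuous_const.add (continuous_id.mul continuous_const)).tendsto (0:ℝ)
            simpa using h
          filter_upwards [hc.eventually (isOpen_Ioo.eventually_mem hlt)] with t ht
          rw [hval t]
          exact ⟨le_of_lt ht.1, le_of_lt ht.2⟩
      filter_upwards [h1, h2] with t ht1 ht2
      exact ⟨ht1, ht2⟩
    rw [Metric.eventually_nhds_iff] at hev
    obtain ⟨ε, hε, hball⟩ := hev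
    have hmem : ∀ c : ℝ, |c| < ε → z + c • d ∈ P := by
      intro c hc
      apply hball
      simpa [Real.dist_eq] using hc
    set c := ε / 2 with hcdef
    have hc1 : z + c • d ∈ P := hmem c (by rw [abs_of_pos (by linarith)]; linarith)
    have hc2 : z + (-c) • d ∈ P := hmem (-c) (by rw [abs_neg, abs_of_pos (by linarith)]; linarith)
    have hseg : z ∈ openSegment ℝ (z + c • d) (z + (-c) • d) := by
      refine ⟨1/2, 1/2, by norm_num, by norm_num, by norm_num, ?_⟩
      module
    have := hz.2 hc1 hc2 hseg
    have hcd : c • d = 0 := by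
      have h := congrArg (fun y => y - z) this
      simpa using h
    rcases smul_eq_zero.1 hcd with h | h
    · exact absurd h (by positivity)
    · exact hdne h
  -- Part 2 : integrality from the spanning property via total unimodularity
  have hBentry : ∀ i j, B i j ∈ intR := by
    intro i j
    have h := hB 1 (fun _ => i) (fun _ => j)
      (fun a b _ => Subsingleton.elim a b) (fun a b _ => Subsingleton.elim a b)
    simp only [Matrix.det_fin_one, Matrix.submatrix_apply, Set.mem_insert_iff,
      Set.mem_singleton_iff] at h
    rcases h with h | h | h <;> rw [h]
    · exact mem_intR.2 ⟨0, by norm_num⟩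
    · exact mem_intR.2 ⟨1, by norm_num⟩
    · exact mem_intR.2 ⟨-1, by norm_num⟩
  by_contra hcon
  push_neg at hcon
  obtain ⟨i0, hi00, hi01⟩ := hcon
  set U := {i : m // ¬ Tbox i} with hUdef
  let π : (m → ℝ) →ₗ[ℝ] (U → ℝ) := LinearMap.funLeft ℝ ℝ (Subtype.val : U → m)
  have hπsurj : Function.Surjective π :=
    LinearMap.funLeft_surjective_of_injective ℝ ℝ _ Subtype.val_injective
  set colset : Set (U → ℝ) := {w | ∃ j, Tcol j ∧ w = fun u => B u.1 j} with hcolset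
  have hspan2 : Submodule.span ℝ colset = ⊤ := by
    have h1 : Submodule.map π (Submodule.span ℝ V) = ⊤ := by
      rw [hspan, Submodule.map_top, LinearMap.range_eq_top]
      exact hπsurj
    rw [Submodule.map_span] at h1
    have h2 : π '' V ⊆ insert 0 colset := by
      rintro w ⟨v, hv, rfl⟩
      rcases hv with ⟨i, hti, rfl⟩ | ⟨j, htj, rfl⟩
      · left
        funext u
        have hne : u.1 ≠ i := fun h => u.2 (h ▸ hti)
        simp [π, LinearMap.funLeft_apply, Pi.single_eq_of_ne hne]
      · right
        exact ⟨j, htj, rfl⟩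
    have h3 : Submodule.span ℝ (π '' V) ≤ Submodule.span ℝ colset := by
      refine Submodule.span_le.2 (h2.trans ?_)
      intro w hw
      rcases Set.mem_insert_iff.1 hw with h | h
      · rw [h]; exact Submodule.zero_mem _
      · exact Submodule.subset_span h
    exact top_le_iff.1 (h1 ▸ h3)
  have h0li : LinearIndependent ℝ (fun x => x : (∅ : Set (U → ℝ)) → (U → ℝ)) :=
    linearIndependent_empty ℝ _
  have h0li' : LinearIndepOn ℝ id (∅ : Set (U → ℝ)) := h0li
  set b := h0li'.extend (Set.empty_subset colset) with hbdef
  have hbsub : b ⊆ colset := h0li'.extend_subset _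
  have hbli : LinearIndependent ℝ (fun x => x : b → (U → ℝ)) := h0li'.linearIndepOn_extend _
  have hbspan : Submodule.span ℝ b = ⊤ := by
    rw [h0li'.span_extend_eq_span]
    exact hspan2
  let bas : Module.Basis b ℝ (U → ℝ) := Module.Basis.mk hbli (by rw [Subtype.range_coe]; exact hbspan.ge)
  haveI : Fintype b := FiniteDimensional.fintypeBasisIndex bas
  have hcard : Fintype.card b = Fintype.card U := by
    have h1 := Module.finrank_eq_card_basis bas
    have h2 : Module.finrank ℝ (U → ℝ) = Fintype.card U := Module.finrank_pi ℝ
    rw [h2] at h1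
    exact h1.symm
  let eU : Fin (Fintype.card U) ≃ U := (Fintype.equivFin U).symm
  let ebU : b ≃ U := Fintype.equivOfCardEq hcard
  let e2 : Fin (Fintype.card U) ≃ b := eU.trans ebU.symm
  have hj : ∀ v : b, ∃ j, Tcol j ∧ (v : U → ℝ) = fun u => B u.1 j := fun v => hbsub v.2
  choose jf hjf1 hjf2 using hj
  let f : Fin (Fintype.card U) → m := fun a => (eU a).1
  have hfinj : Function.Injective f := fun a a' haa =>
    eU.injective (Subtype.ext haa)
  let g : Fin (Fintype.card U) → n := fun c => jf (e2 c)
  have hginj : Function.Injective g := by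
    intro c c' hcc
    apply e2.injective
    apply Subtype.coe_injective
    show ((e2 c : U → ℝ)) = ((e2 c' : U → ℝ))
    rw [hjf2 (e2 c), hjf2 (e2 c')]
    simp only [g] at hcc
    rw [hcc]
  set M := B.submatrix f g with hMdef
  have hdetM : M.det = 1 ∨ M.det = -1 := by
    have hne0 : M.det ≠ 0 := by
      let M' := (Pi.basisFun ℝ U).toMatrix ⇑(bas.reindex ebU)
      haveI : Invertible M' := (Pi.basisFun ℝ U).invertibleToMatrix (bas.reindex ebU)
      have h1 : M'.det ≠ 0 := (Matrix.isUnit_det_of_invertible M').ne_zero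
      have h2 : M = M'.submatrix eU eU := by
        ext a c
        have he : ebU.symm (eU c) = e2 c := rfl
        simp only [hMdef, Matrix.submatrix_apply, M', Module.Basis.toMatrix_apply, Pi.basisFun_repr,
          Module.Basis.reindex_apply, he]
        have h3 : bas (e2 c) = ((e2 c : U → ℝ)) := Module.Basis.mk_apply _ _ _
        rw [h3, hjf2 (e2 c)]
      rw [h2, Matrix.det_submatrix_equiv_self]
      exact h1
    rcases hB _ f g hfinj hginj with h | h | h
    · exact absurd h hne0
    · exact Or.inl h
    · exact Or.inr h
  have hNdet : IsUnit Mᵀ.det := by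
    rw [Matrix.det_transpose]
    rcases hdetM with h | h <;> rw [h]
    · exact isUnit_one
    · exact isUnit_one.neg
  let y : Fin (Fintype.card U) → ℝ := fun a => z (f a)
  let wv : Fin (Fintype.card U) → ℝ :=
    fun c => ∑ i ∈ Finset.univ.filter (fun i => Tbox i), z i * B i (g c)
  have hwint : ∀ c, wv c ∈ intR := by
    intro c
    refine Subring.sum_mem _ fun i hi => Subring.mul_mem _ ?_ (hBentry i (g c))
    have hti : Tbox i := (Finset.mem_filter.1 hi).2
    rcases hti with h | h <;> rw [h]
    · exact mem_intR.2 ⟨0, by norm_num⟩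
    · exact mem_intR.2 ⟨1, by norm_num⟩
  have hrint : ∀ c, s (g c) ∈ intR := by
    intro c
    rcases hjf1 (e2 c) with h | h <;> rw [h]
    · exact mem_intR.2 ⟨lo _, rfl⟩
    · exact mem_intR.2 ⟨hi _, rfl⟩
  have hsys : Mᵀ *ᵥ y = fun c => s (g c) - wv c := by
    funext c
    have hsplit : s (g c) =
        (∑ i ∈ Finset.univ.filter (fun i => ¬ Tbox i), z i * B i (g c)) + wv c := by
      have h := Finset.sum_filter_add_sum_filter_not Finset.univ (fun i => Tbox i)
        (fun i => z i * B i (g c))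
      calc s (g c) = ∑ i, z i * B i (g c) := by rw [hs]
        _ = _ := by rw [← h]; exact add_comm _ _
    have hsub : ∑ i ∈ Finset.univ.filter (fun i => ¬ Tbox i), z i * B i (g c)
        = ∑ u : U, z u.1 * B u.1 (g c) := by
      exact Finset.sum_subtype _ (by simp) _
    have hsub2 : ∑ u : U, z u.1 * B u.1 (g c) = (Mᵀ *ᵥ y) c := by
      rw [← Equiv.sum_comp eU (fun u : U => z u.1 * B u.1 (g c))]
      simp only [Matrix.mulVec, dotProduct, Matrix.transpose_apply, hMdef,
        Matrix.submatrix_apply]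
      exact Finset.sum_congr rfl fun a _ => by ring
    rw [hsplit, hsub, hsub2]
    ring
  have hy : y = Mᵀ⁻¹ *ᵥ fun c => s (g c) - wv c := by
    rw [← hsys, Matrix.mulVec_mulVec, Matrix.nonsing_inv_mul _ hNdet, Matrix.one_mulVec]
  have hNint : ∀ a c, Mᵀ a c ∈ intR := fun a c => hBentry _ _
  have hNinvint : ∀ a c, Mᵀ⁻¹ a c ∈ intR := by
    intro a c
    rw [Matrix.inv_def]
    have hadj : Mᵀ.adjugate a c ∈ intR := by
      rw [Matrix.adjugate_apply]
      refine intR_det _ fun i j => ?_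
      rw [Matrix.updateRow_apply]
      split_ifs with h
      · rcases eq_or_ne j a with h' | h'
        · rw [h', Pi.single_eq_same]; exact mem_intR.2 ⟨1, by norm_num⟩
        · rw [Pi.single_eq_of_ne h']; exact mem_intR.2 ⟨0, by norm_num⟩
      · exact hNint i j
    have hinv : Ring.inverse Mᵀ.det ∈ intR := by
      rw [Ring.inverse_eq_inv']
      rw [Matrix.det_transpose]
      rcases hdetM with h | h <;> rw [h]
      · exact mem_intR.2 ⟨1, by norm_num⟩
      · exact mem_intR.2 ⟨-1, by norm_num⟩
    exact Subring.mul_mem _ hinv hadj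
  have hu0 : ¬ Tbox i0 := by
    simp only [hTbox]
    push_neg
    exact ⟨hi00, hi01⟩
  let u0 : U := ⟨i0, hu0⟩
  let a0 := eU.symm u0
  have hya0 : y a0 ∈ intR := by
    rw [hy]
    simp only [Matrix.mulVec, dotProduct]
    exact Subring.sum_mem _ fun c _ =>
      Subring.mul_mem _ (hNinvint a0 c) (Subring.sub_mem _ (hrint c) (hwint c))
  have hza0 : y a0 = z i0 := by
    show z (f (eU.symm u0)) = z i0
    simp only [f, u0, Equiv.apply_symm_apply]
  obtain ⟨t, ht⟩ := mem_intR.1 hya0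
  rw [hza0] at ht
  rcases hzP.1 i0 with ⟨hle0, hle1⟩
  have h0 : (0:ℝ) < t := lt_of_le_of_ne (ht ▸ hle0) (by rw [← ht] at hi00; exact fun h => hi00 h.symm)
  have h1 : (t:ℝ) < 1 := lt_of_le_of_ne (ht ▸ hle1) (by rw [← ht] at hi01; exact hi01)
  have h0' : (0:ℤ) < t := by exact_mod_cast h0
  have h1' : t < 1 := by exact_mod_cast h1
  omega


/-- Ghouila-Houri, row version for the whole matrix: for a totally unimodular matrix `B`
there is a `±1` signing `x` of the rows such that `xᵀB` is a `{0, ±1}` vector. -/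
theorem ghouilaHouri_full_rows {m n : Type*} [Fintype m] [Fintype n]
    (B : Matrix m n ℝ) (hB : IsTU B) :
    ∃ x : m → ℝ, (∀ i, x i = 1 ∨ x i = -1) ∧
      ∀ j, (∑ i, x i * B i j) ∈ ({0, 1, -1} : Set ℝ) := by
  classical
  -- integer model of B
  set BZ : Matrix m n ℤ := fun i j => if B i j = 1 then 1 else if B i j = -1 then -1 else 0 with hBZ
  have hcast : ∀ i j, ((BZ i j : ℤ) : ℝ) = B i j := by
    intro i j
    rcases tu_entry B hB i j with h | h | h <;> norm_num [hBZ, h]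
  set dZ : n → ℤ := fun j => ∑ i, BZ i j with hdZ
  have hdcast : ∀ j, ((dZ j : ℤ) : ℝ) = ∑ i, B i j := by
    intro j; push_cast [hdZ]; exact Finset.sum_congr rfl fun i _ => hcast i j
  set lo : n → ℤ := fun j => ⌈((dZ j : ℝ) - 1) / 2⌉ with hlo
  set hi : n → ℤ := fun j => ⌊((dZ j : ℝ) + 1) / 2⌋ with hhi
  have hlo2 : ∀ j, (2 * lo j : ℝ) ≤ dZ j := by
    intro j
    have h1 : ((lo j : ℝ)) < ((dZ j : ℝ) - 1) / 2 + 1 := Int.ceil_lt_add_one _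
    have h2 : (2 * lo j : ℤ) < dZ j + 1 := by exact_mod_cast (by push_cast; linarith : ((2 * lo j : ℤ) : ℝ) < ((dZ j + 1 : ℤ) : ℝ))
    exact_mod_cast Int.lt_add_one_iff.1 h2
  have hhi2 : ∀ j, (dZ j : ℝ) ≤ 2 * hi j := by
    intro j
    have h1 : ((dZ j : ℝ) + 1) / 2 - 1 < (hi j : ℝ) := Int.sub_one_lt_floor _
    have h2 : (dZ j : ℤ) - 1 < 2 * hi j := by
      exact_mod_cast (by push_cast; linarith : ((dZ j - 1 : ℤ) : ℝ) < ((2 * hi j : ℤ) : ℝ))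
    have := Int.lt_iff_add_one_le.1 h2
    exact_mod_cast (by omega : (dZ j : ℤ) ≤ 2 * hi j)
  have hlo1 : ∀ j, (2 * lo j : ℝ) ≥ dZ j - 1 := by
    intro j
    have := Int.le_ceil (((dZ j : ℝ) - 1) / 2)
    change _ ≤ ((lo j : ℤ) : ℝ) at this; linarith
  have hhi1 : ∀ j, (2 * hi j : ℝ) ≤ dZ j + 1 := by
    intro j
    have := Int.floor_le (((dZ j : ℝ) + 1) / 2)
    change ((hi j : ℤ) : ℝ) ≤ _ at this; linarith
  set P : Set (m → ℝ) := {z : m → ℝ | (∀ i, z i ∈ Set.Icc (0:ℝ) 1) ∧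
      ∀ j, ((lo j : ℝ) ≤ ∑ i, z i * B i j ∧ ∑ i, z i * B i j ≤ (hi j : ℝ))} with hP
  -- P is compact
  have hcont : ∀ j, Continuous fun z : m → ℝ => ∑ i, z i * B i j := fun j =>
    continuous_finset_sum _ fun i _ => (continuous_apply i).mul continuous_const
  have hPclosed : IsClosed P := by
    have : P = (⋂ i, (fun z : m → ℝ => z i) ⁻¹' Set.Icc 0 1) ∩
        ⋂ j, (fun z : m → ℝ => ∑ i, z i * B i j) ⁻¹' Set.Icc (lo j : ℝ) (hi j : ℝ) := by
      ext z
      simp only [hP, Set.mem_setOf_eq, Set.mem_inter_iff, Set.mem_iInter, Set.mem_preimage,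
        Set.mem_Icc]
    rw [this]
    exact (isClosed_iInter fun i => isClosed_Icc.preimage (continuous_apply i)).inter
      (isClosed_iInter fun j => isClosed_Icc.preimage (hcont j))
  have hPcompact : IsCompact P := by
    refine IsCompact.of_isClosed_subset (isCompact_univ_pi fun _ => (isCompact_Icc : IsCompact (Set.Icc (0:ℝ) 1))) hPclosed ?_
    intro z hz
    exact Set.mem_univ_pi.2 fun i => hz.1 i
  have hPne : P.Nonempty := by
    refine ⟨fun _ => 1 / 2, fun i => by norm_num, fun j => ?_⟩
    have hs : ∑ i, (1 / 2 : ℝ) * B i j = (dZ j : ℝ) / 2 := by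
      rw [← Finset.mul_sum, ← hdcast j]; ring
    rw [hs]
    constructor
    · linarith [hlo2 j]
    · linarith [hhi2 j]
  obtain ⟨z, hzext⟩ := hPcompact.extremePoints_nonempty hPne
  have hzP : z ∈ P := hzext.1
  have hz01 : ∀ i, z i = 0 ∨ z i = 1 := key B hB lo hi z hzext
  -- assemble
  refine ⟨fun i => 2 * z i - 1, fun i => ?_, fun j => ?_⟩
  · rcases hz01 i with h | h <;> simp [h] <;> norm_num
  · have hsum : ∑ i, (2 * z i - 1) * B i j = 2 * (∑ i, z i * B i j) - (dZ j : ℝ) := by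
      rw [hdcast j, Finset.mul_sum, ← Finset.sum_sub_distrib]
      exact Finset.sum_congr rfl fun i _ => by ring
    have hint : ∑ i, (2 * z i - 1) * B i j ∈ intR := by
      refine Subring.sum_mem _ fun i _ => Subring.mul_mem _ ?_ (mem_intR.2 ⟨BZ i j, hcast i j⟩)
      rcases hz01 i with h | h
      · exact mem_intR.2 ⟨-1, by rw [h]; push_cast; ring⟩
      · exact mem_intR.2 ⟨1, by rw [h]; push_cast; ring⟩
    obtain ⟨t, ht⟩ := mem_intR.1 hint
    have hb1 : ∑ i, (2 * z i - 1) * B i j ≤ 1 := by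
      rw [hsum]; have := (hzP.2 j).2; linarith [hhi1 j]
    have hb2 : (-1 : ℝ) ≤ ∑ i, (2 * z i - 1) * B i j := by
      rw [hsum]; have := (hzP.2 j).1; linarith [hlo1 j]
    rw [← ht] at hb1 hb2 ⊢
    have h1 : t ≤ 1 := by exact_mod_cast hb1
    have h2 : (-1 : ℤ) ≤ t := by exact_mod_cast hb2
    interval_cases t <;> simp
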